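/- Let m ≥ 1 and define μ₁(z) = inf over j,k ≥ 1 with j+k ≤ 2m of |1/A_{jk}(z)|^{1/(j+k)} for p₁(z) = |z|^{2m}, where A_{jk}(z) = (1/(j!k!)) ∂^{j+k}p₁/∂z^j∂z̄^k(z). Then μ₁(z) ∼ min{1, |z|^{-(m-1)}}, i.e., there are constants c, C > 0 depending only on m with c·min{1,|z|^{1-m}} ≤ μ₁(z) ≤ C·min{1,|z|^{1-m}} for all z ∈ ℂ. -/
import Mathlib

/-- The coefficients `A_{jk}(z) = binom(m,j) binom(m,k) z^{m-j} z̄^{m-k}` of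
`p₁(z) = |z|^{2m} = z^m z̄^m`. -/
noncomputable def A1 (m j k : ℕ) (z : ℂ) : ℂ :=
  (Nat.choose m j : ℂ) * (Nat.choose m k : ℂ) * z ^ (m - j) * (starRingEnd ℂ z) ^ (m - k)

/-- `μ₁(z) = inf_{j,k ≥ 1, j+k ≤ 2m} |1/A_{jk}(z)|^{1/(j+k)}` (over nonvanishing
coefficients, which all have `j,k ≤ m`). -/
noncomputable def mu1 (m : ℕ) (z : ℂ) : ℝ :=
  sInf {x : ℝ | ∃ j k : ℕ, 1 ≤ j ∧ j ≤ m ∧ 1 ≤ k ∧ k ≤ m ∧ A1 m j k z ≠ 0 ∧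
    x = (1 / ‖A1 m j k z‖) ^ ((1:ℝ) / ((j : ℝ) + (k : ℝ)))}

lemma choose_le_two_pow' (m j : ℕ) : Nat.choose m j ≤ 2 ^ m := by
  rcases le_or_gt j m with h | h
  · calc Nat.choose m j ≤ ∑ i ∈ Finset.range (m+1), Nat.choose m i :=
        Finset.single_le_sum (fun i _ => Nat.zero_le _)
          (Finset.mem_range.mpr (Nat.lt_succ_of_le h))
      _ = 2 ^ m := Nat.sum_range_choose m
  · rw [Nat.choose_eq_zero_of_lt h]; exact Nat.zero_le _

lemma normA1 (m j k : ℕ) (z : ℂ) :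
    ‖A1 m j k z‖ = (Nat.choose m j : ℝ) * (Nat.choose m k : ℝ) * ‖z‖ ^ (m - j) * ‖z‖ ^ (m - k) := by
  simp [A1, norm_mul, norm_pow]

/-- For `p₁(z) = |z|^{2m}`, `μ₁(z) ∼ min{1, |z|^{-(m-1)}} = (max{1,|z|^{m-1}})⁻¹.` -/
theorem stmt14 (m : ℕ) (hm : 1 ≤ m) : ∃ c C : ℝ, 0 < c ∧ 0 < C ∧ ∀ z : ℂ,
    c * (max 1 (‖z‖ ^ (m - 1)))⁻¹ ≤ mu1 m z ∧ mu1 m z ≤ C * (max 1 (‖z‖ ^ (m - 1)))⁻¹ := by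
  refine ⟨((2:ℝ)^m)⁻¹, 1, by positivity, one_pos, fun z => ?_⟩
  set r : ℝ := ‖z‖ with hrdef
  have hr0 : (0:ℝ) ≤ r := norm_nonneg z
  set M : ℝ := max 1 (r ^ (m-1)) with hMdef
  have hM1 : (1:ℝ) ≤ M := le_max_left _ _
  have hM0 : (0:ℝ) < M := lt_of_lt_of_le one_pos hM1
  set S : Set ℝ := {x : ℝ | ∃ j k : ℕ, 1 ≤ j ∧ j ≤ m ∧ 1 ≤ k ∧ k ≤ m ∧ A1 m j k z ≠ 0 ∧
    x = (1 / ‖A1 m j k z‖) ^ ((1:ℝ) / ((j : ℝ) + (k : ℝ)))} with hSdef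
  have hmu : mu1 m z = sInf S := rfl
  have hAmm : A1 m m m z = 1 := by simp [A1]
  have hmem1 : (1:ℝ) ∈ S := by
    refine ⟨m, m, hm, le_rfl, hm, le_rfl, by rw [hAmm]; exact one_ne_zero, ?_⟩
    rw [hAmm]; simp
  have hbdd : BddBelow S := by
    refine ⟨0, ?_⟩
    rintro x ⟨j, k, _, _, _, _, _, rfl⟩
    positivity
  constructor
  · -- lower bound
    rw [hmu]
    apply le_csInf ⟨1, hmem1⟩
    rintro x ⟨j, k, hj1, hjm, hk1, hkm, hA, rfl⟩
    have hAn : 0 < ‖A1 m j k z‖ := norm_pos_iff.mpr hA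
    set K : ℝ := 2^m * M with hKdef
    have hK0 : (0:ℝ) < K := by positivity
    have hjk2 : 2 ≤ j + k := by omega
    have hcj : (Nat.choose m j : ℝ) ≤ 2 ^ m := by exact_mod_cast choose_le_two_pow' m j
    have hck : (Nat.choose m k : ℝ) ≤ 2 ^ m := by exact_mod_cast choose_le_two_pow' m k
    have hc : (Nat.choose m j : ℝ) * (Nat.choose m k : ℝ) ≤ ((2:ℝ)^m) ^ (j + k) := by
      have h2 : ((2:ℝ)^m) ^ 2 ≤ ((2:ℝ)^m) ^ (j + k) :=
        pow_le_pow_right₀ (one_le_pow₀ (by norm_num)) hjk2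
      nlinarith [(by positivity : (0:ℝ) ≤ (Nat.choose m j : ℝ)),
        (by positivity : (0:ℝ) ≤ (Nat.choose m k : ℝ))]
    have hrle : r ^ (m - j) * r ^ (m - k) ≤ M ^ (j + k) := by
      rcases le_or_gt r 1 with h | h
      · have e1 : r ^ (m-j) ≤ 1 := pow_le_one₀ hr0 h
        have e2 : r ^ (m-k) ≤ 1 := pow_le_one₀ hr0 h
        have e3 : r ^ (m-j) * r ^ (m-k) ≤ 1 := mul_le_one₀ e1 (by positivity) e2
        exact e3.trans (one_le_pow₀ hM1)
      · have h1 : (1:ℝ) ≤ r := h.le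
        have hn : (m - j) + (m - k) ≤ (j + k) * (m - 1) := by
          calc (m - j) + (m - k) ≤ (m - 1) + (m - 1) := by omega
            _ = 2 * (m - 1) := by ring
            _ ≤ (j + k) * (m - 1) := Nat.mul_le_mul_right _ hjk2
        calc r ^ (m-j) * r ^ (m-k) = r ^ ((m-j) + (m-k)) := (pow_add r _ _).symm
          _ ≤ r ^ ((j + k) * (m - 1)) := pow_le_pow_right₀ h1 hn
          _ = (r ^ (m-1)) ^ (j + k) := by rw [mul_comm, pow_mul]
          _ ≤ M ^ (j + k) := pow_le_pow_left₀ (by positivity) (le_max_right _ _) _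
    have key : ‖A1 m j k z‖ ≤ K ^ (j + k) := by
      rw [normA1, ← hrdef]
      calc (Nat.choose m j : ℝ) * (Nat.choose m k : ℝ) * r ^ (m - j) * r ^ (m - k)
          = ((Nat.choose m j : ℝ) * (Nat.choose m k : ℝ)) * (r ^ (m - j) * r ^ (m - k)) := by
            ring
        _ ≤ ((2:ℝ)^m) ^ (j + k) * M ^ (j + k) :=
            mul_le_mul hc hrle (by positivity) (by positivity)
        _ = K ^ (j + k) := (mul_pow _ _ _).symm
    have hinv : (1:ℝ) / K ^ (j + k) ≤ 1 / ‖A1 m j k z‖ :=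
      one_div_le_one_div_of_le hAn key
    have hmono := Real.rpow_le_rpow (by positivity) hinv
      (by positivity : (0:ℝ) ≤ (1:ℝ) / ((j:ℝ) + (k:ℝ)))
    have hcast : (K:ℝ) ^ (j + k) = K ^ (((j:ℝ) + (k:ℝ))) := by
      rw [← Real.rpow_natCast K (j + k)]
      congr 1
      push_cast
      ring
    have hlhs : ((1:ℝ) / K ^ (j + k)) ^ ((1:ℝ) / ((j:ℝ) + (k:ℝ))) = K⁻¹ := by
      have hs : ((j:ℝ) + (k:ℝ)) ≠ 0 := by positivity
      rw [one_div (K ^ (j+k)), hcast, ← Real.rpow_neg hK0.le, ← Real.rpow_mul hK0.le]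
      rw [show -((j:ℝ) + (k:ℝ)) * (1 / ((j:ℝ) + (k:ℝ))) = -1 by field_simp]
      rw [Real.rpow_neg_one]
    rw [hlhs] at hmono
    calc ((2:ℝ)^m)⁻¹ * M⁻¹ = K⁻¹ := by rw [hKdef, mul_inv]
      _ ≤ _ := hmono
  · -- upper bound
    rw [hmu, one_mul]
    rcases le_or_gt r 1 with h | h
    · have hMeq : M = 1 := max_eq_left (pow_le_one₀ hr0 h)
      rw [hMeq, inv_one]
      exact csInf_le hbdd hmem1
    · have h1 : (1:ℝ) ≤ r := h.le
      have hz : z ≠ 0 := norm_pos_iff.mp (by rw [← hrdef]; linarith)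
      have hzc : (starRingEnd ℂ) z ≠ 0 := by simpa using hz
      have hmne : (m:ℂ) ≠ 0 := Nat.cast_ne_zero.mpr (by omega)
      have hA11 : A1 m 1 1 z ≠ 0 := by
        simp only [A1, Nat.choose_one_right]
        exact mul_ne_zero (mul_ne_zero (mul_ne_zero hmne hmne) (pow_ne_zero _ hz))
          (pow_ne_zero _ hzc)
      have hmem2 : ((1:ℝ) / ‖A1 m 1 1 z‖) ^ ((1:ℝ) / (((1:ℕ):ℝ) + ((1:ℕ):ℝ))) ∈ S :=
        ⟨1, 1, le_rfl, hm, le_rfl, hm, hA11, rfl⟩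
      have hMeq : M = r ^ (m-1) := max_eq_right (one_le_pow₀ h1)
      have hq0 : (0:ℝ) < r ^ (m-1) := by positivity
      have hb : (r ^ (m-1)) ^ 2 ≤ ‖A1 m 1 1 z‖ := by
        rw [normA1, Nat.choose_one_right, ← hrdef]
        have hm1 : (1:ℝ) ≤ (m:ℝ) := by exact_mod_cast hm
        have hq : (0:ℝ) ≤ r ^ (m-1) * r ^ (m-1) := by positivity
        have hmm : (1:ℝ) ≤ (m:ℝ) * (m:ℝ) := by nlinarith
        nlinarith [hq, hmm]
      have hinv : (1:ℝ) / ‖A1 m 1 1 z‖ ≤ 1 / (r ^ (m-1)) ^ 2 :=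
        one_div_le_one_div_of_le (by positivity) hb
      have hmono := Real.rpow_le_rpow (by positivity) hinv
        (by norm_num : (0:ℝ) ≤ (1:ℝ) / (((1:ℕ):ℝ) + ((1:ℕ):ℝ)))
      have hrhs : ((1:ℝ) / (r ^ (m-1)) ^ 2) ^ ((1:ℝ) / (((1:ℕ):ℝ) + ((1:ℕ):ℝ)))
          = (r ^ (m-1))⁻¹ := by
        rw [show ((1:ℝ) / (((1:ℕ):ℝ) + ((1:ℕ):ℝ))) = (1:ℝ)/2 by norm_num]
        rw [one_div ((r ^ (m-1)) ^ 2), ← Real.rpow_natCast (r ^ (m-1)) 2,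
          ← Real.rpow_neg hq0.le, ← Real.rpow_mul hq0.le]
        norm_num [Real.rpow_neg_one]
      rw [hrhs] at hmono
      rw [hMeq]
      exact le_trans (csInf_le hbdd hmem2) hmono
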